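/- The sets X₁₄ and A₆ do not intersect: X₁₄ ∩ A₆ = ∅. -/

import Mathlib

open Complex

/-- `zeta t = exp(2πit/7)`. -/
noncomputable def zeta (t : ℝ) : ℂ := Complex.exp ((2 * Real.pi * t / 7 : ℝ) * Complex.I)

/-- The 3-sphere as the unit sphere in `ℂ × ℂ`. -/
def Sph3 : Set (ℂ × ℂ) := {p | ‖p.1‖ ^ 2 + ‖p.2‖ ^ 2 = 1}

/-- The "diagonal" 3-sphere `Δ_k = {((x₁,x₂),(ζᵏx₁,ζ^{2k}x₂))} ⊆ S³ × S³`. -/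
def Delta (k : ℕ) : Set ((ℂ × ℂ) × (ℂ × ℂ)) :=
  {q | ∃ p ∈ Sph3, q = (p, (zeta k * p.1, zeta (2 * k) * p.2))}

/-- `A_k = {((x₁,x₂),(ζˢx₁,ζ^{2s}x₂)) : (x₁,x₂) ∈ S³, s ∈ [k−1,k]} ⊆ S³ × S³`. -/
def A (k : ℕ) : Set ((ℂ × ℂ) × (ℂ × ℂ)) :=
  {q | ∃ p ∈ Sph3, ∃ s : ℝ, (k : ℝ) - 1 ≤ s ∧ s ≤ k ∧
    q = (p, (zeta s * p.1, zeta (2 * s) * p.2))}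

/-- `X₁₄ = {((r,x),(ζ^{4t}r, ζᵗx)) : (r,x) ∈ D₂, t ∈ [0,1]}`, where
`D₂ = {(r,x) ∈ ℝ × ℂ : 0 ≤ r ≤ 1, r² + |x|² = 1} ⊆ S³`. -/
def X14 : Set ((ℂ × ℂ) × (ℂ × ℂ)) :=
  {q | ∃ (r : ℝ) (x : ℂ), 0 ≤ r ∧ r ≤ 1 ∧ r ^ 2 + ‖x‖ ^ 2 = 1 ∧
    ∃ t ∈ Set.Icc (0:ℝ) 1, q = (((r : ℂ), x), (zeta (4 * t) * r, zeta t * x))}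

lemma zeta_eq_iff {a b : ℝ} (h : zeta a = zeta b) : ∃ n : ℤ, a = b + 7 * n := by
  unfold zeta at h
  rw [Complex.exp_eq_exp_iff_exists_int] at h
  obtain ⟨n, hn⟩ := h
  refine ⟨n, ?_⟩
  have hI : (Complex.I : ℂ) ≠ 0 := Complex.I_ne_zero
  have h2 : ((2 * Real.pi * a / 7 : ℝ) : ℂ) = ((2 * Real.pi * b / 7 + n * (2 * Real.pi) : ℝ) : ℂ) := by
    apply mul_right_cancel₀ hI
    push_cast at hn ⊢
    linear_combination hn
  have h3 : 2 * Real.pi * a / 7 = 2 * Real.pi * b / 7 + n * (2 * Real.pi) :=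
    Complex.ofReal_inj.mp h2
  have hpi : Real.pi ≠ 0 := Real.pi_ne_zero
  field_simp at h3
  nlinarith [Real.pi_pos, h3]

/-- The sets `X₁₄` and `A₆` do not intersect. -/
theorem stmt_14 : X14 ∩ A 6 = ∅ := by
  ext q
  simp only [Set.mem_inter_iff, Set.mem_empty_iff_false, iff_false]
  rintro ⟨⟨r, x, hr0, hr1, hsum, t, ⟨ht0, ht1⟩, hq1⟩, ⟨p, hp, s, hs1, hs2, hq2⟩⟩
  rw [hq1] at hq2
  have hp1 : p.1 = (r : ℂ) := by rw [Prod.ext_iff] at hq2; exact (Prod.ext_iff.mp hq2.1).1.symm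
  have hp2 : p.2 = x := by rw [Prod.ext_iff] at hq2; exact (Prod.ext_iff.mp hq2.1).2.symm
  have he1 : zeta (4 * t) * (r : ℂ) = zeta s * (r : ℂ) := by
    have := (Prod.ext_iff.mp (Prod.ext_iff.mp hq2).2).1
    rw [hp1] at this; exact this
  have he2 : zeta t * x = zeta (2 * s) * x := by
    have := (Prod.ext_iff.mp (Prod.ext_iff.mp hq2).2).2
    rw [hp2] at this; exact this
  norm_num at hs1 hs2
  by_cases hr : r = 0
  · -- then |x| = 1 so x ≠ 0
    have hx : x ≠ 0 := by
      intro h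
      rw [hr, h] at hsum
      simp at hsum
    have hz : zeta t = zeta (2 * s) := mul_right_cancel₀ hx he2
    obtain ⟨n, hn⟩ := zeta_eq_iff hz
    have h1 : (-12 : ℝ) ≤ 7 * n := by nlinarith
    have h2 : (7 : ℝ) * n ≤ -9 := by nlinarith
    have h1' : (-12 : ℤ) ≤ 7 * n := by exact_mod_cast h1
    have h2' : (7 : ℤ) * n ≤ -9 := by exact_mod_cast h2
    omega
  · have hrc : (r : ℂ) ≠ 0 := by exact_mod_cast hr
    have hz : zeta (4 * t) = zeta s := mul_right_cancel₀ hrc he1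
    obtain ⟨n, hn⟩ := zeta_eq_iff hz
    have h1 : (-6 : ℝ) ≤ 7 * n := by nlinarith
    have h2 : (7 : ℝ) * n ≤ -1 := by nlinarith
    have h1' : (-6 : ℤ) ≤ 7 * n := by exact_mod_cast h1
    have h2' : (7 : ℤ) * n ≤ -1 := by exact_mod_cast h2
    omega
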